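/- In a right-angled Coxeter group with generating set Γ, for any two subsets s and t of Γ, the subgroup generated by s ∩ t equals the intersection of the subgroup generated by s with the subgroup generated by t. -/

import Mathlib

variable {Γ : Type*}

/-- Two generators commute: they are distinct and non-adjacent in the Coxeter graph. -/
def RACommutes (adj : Γ → Γ → Prop) (γ δ : Γ) : Prop := γ ≠ δ ∧ ¬ adj γ δ

/-- Relations of the right-angled Coxeter group: squares of generators and
commutators of commuting (non-adjacent) pairs. -/
def coxRels (adj : Γ → Γ → Prop) : Set (FreeGroup Γ) :=
  {r | (∃ γ : Γ, r = FreeGroup.of γ * FreeGroup.of γ) ∨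
    (∃ γ δ : Γ, RACommutes adj γ δ ∧
      r = FreeGroup.of γ * FreeGroup.of δ * (FreeGroup.of γ)⁻¹ * (FreeGroup.of δ)⁻¹)}

private lemma rel_one {adj : Γ → Γ → Prop} {r : FreeGroup Γ} (h : r ∈ coxRels adj) :
    (QuotientGroup.mk r : PresentedGroup (coxRels adj)) = 1 :=
  (QuotientGroup.eq_one_iff r).2 (Subgroup.subset_normalClosure h)

private lemma mk_mul {adj : Γ → Γ → Prop} (a b : FreeGroup Γ) :
    (QuotientGroup.mk (a * b) : PresentedGroup (coxRels adj)) =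
      QuotientGroup.mk a * QuotientGroup.mk b := rfl

private lemma mk_inv {adj : Γ → Γ → Prop} (a : FreeGroup Γ) :
    (QuotientGroup.mk a⁻¹ : PresentedGroup (coxRels adj)) = (QuotientGroup.mk a)⁻¹ := rfl

/-- The square relation in the presented group. -/
private lemma sq_one {adj : Γ → Γ → Prop} (γ : Γ) :
    (PresentedGroup.of γ : PresentedGroup (coxRels adj)) * PresentedGroup.of γ = 1 := by
  have := rel_one (adj := adj) (r := FreeGroup.of γ * FreeGroup.of γ) (Or.inl ⟨γ, rfl⟩)
  rwa [mk_mul] at this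

/-- The commutator relation in the presented group. -/
private lemma comm_one {adj : Γ → Γ → Prop} {γ δ : Γ} (h : RACommutes adj γ δ) :
    (PresentedGroup.of γ : PresentedGroup (coxRels adj)) * PresentedGroup.of δ *
      (PresentedGroup.of γ)⁻¹ * (PresentedGroup.of δ)⁻¹ = 1 := by
  have := rel_one (adj := adj)
    (r := FreeGroup.of γ * FreeGroup.of δ * (FreeGroup.of γ)⁻¹ * (FreeGroup.of δ)⁻¹)
    (Or.inr ⟨γ, δ, h, rfl⟩)
  rwa [mk_mul, mk_mul, mk_mul, mk_inv, mk_inv] at this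

open Classical in
/-- The retraction sending generators in `t` to themselves and others to 1. -/
private noncomputable def proj (adj : Γ → Γ → Prop) (t : Set Γ) :
    PresentedGroup (coxRels adj) →* PresentedGroup (coxRels adj) :=
  PresentedGroup.toGroup
    (f := fun γ => if γ ∈ t then (PresentedGroup.of γ : PresentedGroup (coxRels adj)) else 1)
    (by
      intro r hr
      rcases hr with ⟨γ, rfl⟩ | ⟨γ, δ, hc, rfl⟩
      · simp only [map_mul, FreeGroup.lift_apply_of]
        split_ifs with h
        · exact sq_one γ
        · simp
      · simp only [map_mul, map_inv, FreeGroup.lift_apply_of]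
        split_ifs with h1 h2 h2
        · exact comm_one hc
        · simp
        · simp
        · simp)

open Classical in
private lemma proj_of {adj : Γ → Γ → Prop} (t : Set Γ) (γ : Γ) :
    proj adj t (PresentedGroup.of γ) =
      if γ ∈ t then (PresentedGroup.of γ : PresentedGroup (coxRels adj)) else 1 := by
  simp [proj, PresentedGroup.toGroup.of]

private lemma proj_fix {adj : Γ → Γ → Prop} (t : Set Γ) :
    ∀ x ∈ Subgroup.closure
        ((fun γ => (PresentedGroup.of γ : PresentedGroup (coxRels adj))) '' t),
      proj adj t x = x := by
  intro x hx
  induction hx using Subgroup.closure_induction with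
  | mem g hg =>
    obtain ⟨γ, hγ, rfl⟩ := hg
    rw [proj_of, if_pos hγ]
  | one => simp
  | mul a b _ _ ha hb => rw [map_mul, ha, hb]
  | inv a _ ha => rw [map_inv, ha]

private lemma proj_mem {adj : Γ → Γ → Prop} (s t : Set Γ) :
    ∀ x ∈ Subgroup.closure
        ((fun γ => (PresentedGroup.of γ : PresentedGroup (coxRels adj))) '' s),
      proj adj t x ∈ Subgroup.closure
        ((fun γ => (PresentedGroup.of γ : PresentedGroup (coxRels adj))) '' (s ∩ t)) := by
  intro x hx
  induction hx using Subgroup.closure_induction with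
  | mem g hg =>
    obtain ⟨γ, hγ, rfl⟩ := hg
    rw [proj_of]
    split_ifs with h
    · exact Subgroup.subset_closure ⟨γ, ⟨hγ, h⟩, rfl⟩
    · exact Subgroup.one_mem _
  | one => exact Subgroup.one_mem _
  | mul a b _ _ ha hb => rw [map_mul]; exact Subgroup.mul_mem _ ha hb
  | inv a _ ha => rw [map_inv]; exact Subgroup.inv_mem _ ha

/-- In a right-angled Coxeter group, the subgroup generated by `s ∩ t` is the
intersection of the subgroups generated by `s` and by `t`. -/
theorem closure_inter_eq_inf [Fintype Γ]
    (adj : Γ → Γ → Prop) (hsym : Symmetric adj) (hirr : Irreflexive adj)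
    (s t : Set Γ) :
    Subgroup.closure
        ((fun γ => (PresentedGroup.of γ : PresentedGroup (coxRels adj))) '' (s ∩ t)) =
      Subgroup.closure
          ((fun γ => (PresentedGroup.of γ : PresentedGroup (coxRels adj))) '' s) ⊓
        Subgroup.closure
          ((fun γ => (PresentedGroup.of γ : PresentedGroup (coxRels adj))) '' t) := by
  classical
  apply le_antisymm
  · exact le_inf
      (Subgroup.closure_mono (Set.image_mono Set.inter_subset_left))
      (Subgroup.closure_mono (Set.image_mono Set.inter_subset_right))
  · rintro x ⟨hxs, hxt⟩
    have := proj_mem s t x hxs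
    rwa [proj_fix t x hxt] at this
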